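/- Let $\phi\colon\mathcal{A}\to\operatorname{End}(V)$ be a unital positive linear map from a unital $C^*$-algebra to the operators on a finite-dimensional Hilbert space $V$. Then for every normal element $a\in\mathcal{A}$, Kadison's inequality holds: $\phi(a)\phi(a)^*\le\phi(aa^*)$ in the operator order on $V$. -/

import Mathlib

open ContinuousLinearMap in
/-- Cauchy–Schwarz for a positive operator. -/
lemma kadison_aux_cs {V : Type*} [NormedAddCommGroup V] [InnerProductSpace ℂ V]
    [CompleteSpace V] {P : V →L[ℂ] V} (hP : P.IsPositive) (v w : V) :
    ‖(inner ℂ (P v) w : ℂ)‖ ^ 2 ≤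
      RCLike.re (inner ℂ (P v) v : ℂ) * RCLike.re (inner ℂ (P w) w : ℂ) := by
  have hsym : ∀ x y : V, (inner ℂ (P x) y : ℂ) = inner ℂ x (P y) :=
    (isSelfAdjoint_iff_isSymmetric.mp hP.isSelfAdjoint)
  let core : PreInnerProductSpace.Core ℂ V :=
  { inner := fun x y => inner ℂ (P x) y
    conj_inner_symm := fun x y => by
      show (starRingEnd ℂ) (inner ℂ (P y) x : ℂ) = (inner ℂ (P x) y : ℂ)
      rw [hsym y x, inner_conj_symm]
    re_inner_nonneg := hP.re_inner_nonneg_left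
    add_left := fun x y z => by
      show (inner ℂ (P (x + y)) z : ℂ) = (inner ℂ (P x) z : ℂ) + (inner ℂ (P y) z : ℂ)
      rw [map_add, inner_add_left]
    smul_left := fun x y r => by
      show (inner ℂ (P (r • x)) y : ℂ) = (starRingEnd ℂ) r * (inner ℂ (P x) y : ℂ)
      rw [map_smul, inner_smul_left] }
  have key := @InnerProductSpace.Core.inner_mul_inner_self_le ℂ V _ _ _ core v w
  have h1 : ‖(inner ℂ (P w) v : ℂ)‖ = ‖(inner ℂ (P v) w : ℂ)‖ := by
    rw [hsym w v, ← inner_conj_symm]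
    exact RCLike.norm_conj _
  have h2 : (core.inner v w : ℂ) = inner ℂ (P v) w := rfl
  calc ‖(inner ℂ (P v) w : ℂ)‖ ^ 2 = ‖(inner ℂ (P v) w : ℂ)‖ * ‖(inner ℂ (P w) v : ℂ)‖ := by
        rw [h1, sq]
    _ ≤ RCLike.re (inner ℂ (P v) v : ℂ) * RCLike.re (inner ℂ (P w) w : ℂ) := key



open ContinuousLinearMap in
/-- Schwarz inequality for a finite positive partition of unity on operators. -/
lemma kadison_aux_sum {V : Type*} [NormedAddCommGroup V] [InnerProductSpace ℂ V]
    [CompleteSpace V] (F : Finset ℂ) (P : ℂ → V →L[ℂ] V)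
    (hP : ∀ c ∈ F, (P c).IsPositive) (hsum : ∑ c ∈ F, P c = 1) (lam : ℂ → ℂ) (v w : V) :
    ‖(inner ℂ ((∑ c ∈ F, lam c • P c) v) w : ℂ)‖ ≤
      Real.sqrt (RCLike.re
        (inner ℂ ((∑ c ∈ F, ((‖lam c‖ ^ 2 : ℝ) : ℂ) • P c) v) v : ℂ)) * ‖w‖ := by
  set p : ℂ → ℝ := fun c => RCLike.re (inner ℂ (P c v) v : ℂ) with hp
  set q : ℂ → ℝ := fun c => RCLike.re (inner ℂ (P c w) w : ℂ) with hq
  have hp0 : ∀ c ∈ F, 0 ≤ p c := fun c hc => (hP c hc).re_inner_nonneg_left v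
  have hq0 : ∀ c ∈ F, 0 ≤ q c := fun c hc => (hP c hc).re_inner_nonneg_left w
  -- step 1 : expand the inner ℂ product as a sum
  have h1 : (inner ℂ ((∑ c ∈ F, lam c • P c) v) w : ℂ)
      = ∑ c ∈ F, (starRingEnd ℂ) (lam c) * (inner ℂ (P c v) w : ℂ) := by
    rw [ContinuousLinearMap.sum_apply, sum_inner]
    exact Finset.sum_congr rfl fun c _ => by
      rw [ContinuousLinearMap.smul_apply, inner_smul_left]
  have h2 : ‖(inner ℂ ((∑ c ∈ F, lam c • P c) v) w : ℂ)‖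
      ≤ ∑ c ∈ F, (‖lam c‖ * Real.sqrt (p c)) * Real.sqrt (q c) := by
    rw [h1]
    refine (norm_sum_le _ _).trans (Finset.sum_le_sum fun c hc => ?_)
    rw [norm_mul, RCLike.norm_conj]
    rw [mul_assoc]
    refine mul_le_mul_of_nonneg_left ?_ (norm_nonneg _)
    have := kadison_aux_cs (hP c hc) v w
    calc ‖(inner ℂ (P c v) w : ℂ)‖ = Real.sqrt (‖(inner ℂ (P c v) w : ℂ)‖ ^ 2) := by
          rw [Real.sqrt_sq (norm_nonneg _)]
      _ ≤ Real.sqrt (p c * q c) := Real.sqrt_le_sqrt this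
      _ = Real.sqrt (p c) * Real.sqrt (q c) := Real.sqrt_mul (hp0 c hc) _
  -- step 2 : Cauchy-Schwarz for sums
  have h3 : (∑ c ∈ F, (‖lam c‖ * Real.sqrt (p c)) * Real.sqrt (q c)) ^ 2
      ≤ (∑ c ∈ F, ‖lam c‖ ^ 2 * p c) * ∑ c ∈ F, q c := by
    have := Finset.sum_mul_sq_le_sq_mul_sq F
      (fun c => ‖lam c‖ * Real.sqrt (p c)) (fun c => Real.sqrt (q c))
    refine this.trans (le_of_eq ?_)
    congr 1
    · exact Finset.sum_congr rfl fun c hc => by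
        rw [mul_pow, Real.sq_sqrt (hp0 c hc)]
    · exact Finset.sum_congr rfl fun c hc => Real.sq_sqrt (hq0 c hc)
  have hqsum : ∑ c ∈ F, q c = ‖w‖ ^ 2 := by
    have : ∑ c ∈ F, q c = RCLike.re (inner ℂ ((∑ c ∈ F, P c) w) w : ℂ) := by
      rw [ContinuousLinearMap.sum_apply, sum_inner, map_sum]
    rw [this, hsum, ContinuousLinearMap.one_apply, ← @inner_self_eq_norm_sq ℂ]
  have hpsum : ∑ c ∈ F, ‖lam c‖ ^ 2 * p c
      = RCLike.re (inner ℂ ((∑ c ∈ F, ((‖lam c‖ ^ 2 : ℝ) : ℂ) • P c) v) v : ℂ) := by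
    rw [ContinuousLinearMap.sum_apply, sum_inner, map_sum]
    exact Finset.sum_congr rfl fun c _ => by
      rw [ContinuousLinearMap.smul_apply, inner_smul_left, Complex.conj_ofReal]
      exact (Complex.re_ofReal_mul _ _).symm
  have hsum0 : 0 ≤ ∑ c ∈ F, (‖lam c‖ * Real.sqrt (p c)) * Real.sqrt (q c) :=
    Finset.sum_nonneg fun c hc => mul_nonneg
      (mul_nonneg (norm_nonneg _) (Real.sqrt_nonneg _)) (Real.sqrt_nonneg _)
  refine h2.trans ?_
  have h4 : (∑ c ∈ F, (‖lam c‖ * Real.sqrt (p c)) * Real.sqrt (q c))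
      = Real.sqrt ((∑ c ∈ F, (‖lam c‖ * Real.sqrt (p c)) * Real.sqrt (q c)) ^ 2) :=
    (Real.sqrt_sq hsum0).symm
  rw [h4, ← hpsum]
  calc Real.sqrt ((∑ c ∈ F, (‖lam c‖ * Real.sqrt (p c)) * Real.sqrt (q c)) ^ 2)
      ≤ Real.sqrt ((∑ c ∈ F, ‖lam c‖ ^ 2 * p c) * ∑ c ∈ F, q c) := Real.sqrt_le_sqrt h3
    _ = Real.sqrt (∑ c ∈ F, ‖lam c‖ ^ 2 * p c) * Real.sqrt (∑ c ∈ F, q c) :=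
        Real.sqrt_mul (Finset.sum_nonneg fun c hc => mul_nonneg (sq_nonneg _) (hp0 c hc)) _
    _ = Real.sqrt (∑ c ∈ F, ‖lam c‖ ^ 2 * p c) * ‖w‖ := by
        rw [hqsum, Real.sqrt_sq (norm_nonneg w)]



open ContinuousLinearMap in
/-- Norm bound on inner ℂ products against a positive unital map. -/
lemma kadison_aux_bound {A : Type*} [CStarAlgebra A] [PartialOrder A] [StarOrderedRing A]
    {V : Type*} [NormedAddCommGroup V] [InnerProductSpace ℂ V] [CompleteSpace V]
    (φ : A →ₗ[ℂ] (V →L[ℂ] V)) (hunital : φ 1 = 1)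
    (hpos : ∀ x : A, 0 ≤ x → (φ x).IsPositive) (x : A) (v w : V) :
    ‖(inner ℂ ((φ x) v) w : ℂ)‖ ≤ 6 * ‖x‖ * ‖v‖ * ‖w‖ := by
  -- first, the self-adjoint case
  have hself : ∀ y : A, IsSelfAdjoint y → ∀ v w : V,
      ‖(inner ℂ ((φ y) v) w : ℂ)‖ ≤ 3 * ‖y‖ * ‖v‖ * ‖w‖ := by
    intro y hy v w
    set δ : ℝ := ‖y‖ with hδ
    have hδ0 : (0:ℝ) ≤ δ := norm_nonneg y
    have halg : algebraMap ℝ A δ = (δ : ℂ) • (1 : A) := by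
      rw [Algebra.algebraMap_eq_smul_one, Complex.coe_smul]
    have hφalg : φ ((δ : ℂ) • (1 : A)) = (δ : ℂ) • (1 : V →L[ℂ] V) := by
      rw [map_smul, hunital]
    -- the positive operator Q = φ y + δ
    have hyδ : (0:A) ≤ y + (δ : ℂ) • 1 := by
      have h0 := hy.neg_algebraMap_norm_le_self
      rw [halg] at h0
      simpa using add_le_add_left h0 ((δ:ℂ) • (1:A))
    have hQ : ((φ y) + (δ : ℂ) • (1 : V →L[ℂ] V)).IsPositive := by
      rw [← hφalg, ← map_add]
      exact hpos _ hyδ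
    set Q : V →L[ℂ] V := (φ y) + (δ : ℂ) • (1 : V →L[ℂ] V) with hQdef
    -- re ⟪φ y u, u⟫ ≤ δ ‖u‖²
    have hmono : ∀ u : V, RCLike.re (inner ℂ ((φ y) u) u : ℂ) ≤ δ * ‖u‖ ^ 2 := by
      intro u
      have h1 : (0:A) ≤ (δ : ℂ) • 1 - y := by
        have h0 := hy.le_algebraMap_norm_self
        rw [halg] at h0
        exact sub_nonneg.mpr h0
      have h2 := (hpos _ h1).re_inner_nonneg_left u
      have h3 : (φ ((δ : ℂ) • 1 - y)) u = (δ : ℂ) • u - (φ y) u := by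
        rw [map_sub, hφalg]; rfl
      rw [h3, inner_sub_left, map_sub, inner_smul_left, Complex.conj_ofReal] at h2
      have h4 : RCLike.re ((δ : ℂ) * (inner ℂ u u : ℂ)) = δ * ‖u‖ ^ 2 := by
        rw [RCLike.re_to_complex, Complex.re_ofReal_mul]
        congr 1
        rw [← RCLike.re_to_complex, ← @inner_self_eq_norm_sq ℂ]
      rw [h4] at h2
      linarith
    -- re ⟪Q u, u⟫ ≤ 2 δ ‖u‖²
    have hQbound : ∀ u : V, RCLike.re (inner ℂ (Q u) u : ℂ) ≤ 2 * δ * ‖u‖ ^ 2 := by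
      intro u
      have h5 : Q u = (φ y) u + (δ : ℂ) • u := rfl
      rw [h5, inner_add_left, map_add, inner_smul_left, Complex.conj_ofReal]
      simp only [RCLike.re_to_complex]
      rw [Complex.re_ofReal_mul]
      have h6 : (inner ℂ u u : ℂ).re = ‖u‖ ^ 2 := by
        rw [← RCLike.re_to_complex, ← @inner_self_eq_norm_sq ℂ]
      rw [h6]
      have hm := hmono u
      rw [RCLike.re_to_complex] at hm
      nlinarith [hm]
    -- Cauchy-Schwarz for Q
    have hQcs : ‖(inner ℂ (Q v) w : ℂ)‖ ≤ 2 * δ * ‖v‖ * ‖w‖ := by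
      have h1 := kadison_aux_cs hQ v w
      have h2 : RCLike.re (inner ℂ (Q v) v : ℂ) * RCLike.re (inner ℂ (Q w) w : ℂ)
          ≤ (2 * δ * ‖v‖ ^ 2) * (2 * δ * ‖w‖ ^ 2) := by
        have hv := hQbound v; have hw := hQbound w
        have hv0 := hQ.re_inner_nonneg_left v; have hw0 := hQ.re_inner_nonneg_left w
        nlinarith
      have h3 : (2 * δ * ‖v‖ ^ 2) * (2 * δ * ‖w‖ ^ 2) = (2 * δ * ‖v‖ * ‖w‖) ^ 2 := by ring
      have h4 : ‖(inner ℂ (Q v) w : ℂ)‖ ^ 2 ≤ (2 * δ * ‖v‖ * ‖w‖) ^ 2 := by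
        rw [← h3]; exact h1.trans h2
      have h5 : (0:ℝ) ≤ 2 * δ * ‖v‖ * ‖w‖ := by positivity
      nlinarith [norm_nonneg (inner ℂ (Q v) w : ℂ)]
    -- conclude
    have hdecomp : (φ y) v = Q v - (δ : ℂ) • v := by
      rw [hQdef]; simp
    rw [hdecomp, inner_sub_left, inner_smul_left, Complex.conj_ofReal]
    calc ‖(inner ℂ (Q v) w : ℂ) - (δ:ℂ) * inner ℂ v w‖
        ≤ ‖(inner ℂ (Q v) w : ℂ)‖ + ‖(δ:ℂ) * (inner ℂ v w : ℂ)‖ := norm_sub_le _ _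
      _ ≤ 2 * δ * ‖v‖ * ‖w‖ + δ * (‖v‖ * ‖w‖) := by
          refine add_le_add hQcs ?_
          rw [norm_mul, Complex.norm_real, Real.norm_eq_abs, abs_of_nonneg hδ0]
          exact mul_le_mul_of_nonneg_left (norm_inner_le_norm v w) hδ0
      _ = 3 * δ * ‖v‖ * ‖w‖ := by ring
  -- general case: decompose into real and imaginary parts
  have key : ∀ h k : A, IsSelfAdjoint h → IsSelfAdjoint k → x = h + Complex.I • k →
      ‖h‖ ≤ ‖x‖ → ‖k‖ ≤ ‖x‖ → ‖(inner ℂ ((φ x) v) w : ℂ)‖ ≤ 6 * ‖x‖ * ‖v‖ * ‖w‖ := by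
    intro h k hhsa hksa hxhk hnh hnk
    have hsplit : (φ x) v = (φ h) v + Complex.I • ((φ k) v) := by
      rw [hxhk, map_add, map_smul, ContinuousLinearMap.add_apply,
        ContinuousLinearMap.smul_apply]
    rw [hsplit, inner_add_left, inner_smul_left]
    have e1 : 3 * ‖h‖ * ‖v‖ * ‖w‖ ≤ 3 * ‖x‖ * ‖v‖ * ‖w‖ := by gcongr
    have e2 : 3 * ‖k‖ * ‖v‖ * ‖w‖ ≤ 3 * ‖x‖ * ‖v‖ * ‖w‖ := by gcongr
    calc ‖(inner ℂ ((φ h) v) w : ℂ) + (starRingEnd ℂ) Complex.I * (inner ℂ ((φ k) v) w : ℂ)‖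
        ≤ ‖(inner ℂ ((φ h) v) w : ℂ)‖ + ‖(starRingEnd ℂ) Complex.I * (inner ℂ ((φ k) v) w : ℂ)‖ :=
          norm_add_le _ _
      _ ≤ 3 * ‖h‖ * ‖v‖ * ‖w‖ + 3 * ‖k‖ * ‖v‖ * ‖w‖ := by
          refine add_le_add (hself h hhsa v w) ?_
          rw [norm_mul, RCLike.norm_conj, Complex.norm_I, one_mul]
          exact hself k hksa v w
      _ ≤ 6 * ‖x‖ * ‖v‖ * ‖w‖ := by linarith
  refine key ((2⁻¹ : ℂ) • (x + star x)) ((2⁻¹ * Complex.I : ℂ) • (star x - x)) ?_ ?_ ?_ ?_ ?_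
  · rw [IsSelfAdjoint, star_smul, star_add, star_star]
    rw [show star (2⁻¹ : ℂ) = (2⁻¹ : ℂ) by norm_num [Complex.ext_iff]]
    rw [add_comm]
  · rw [IsSelfAdjoint, star_smul, star_sub, star_star]
    rw [show star (2⁻¹ * Complex.I : ℂ) = -(2⁻¹ * Complex.I : ℂ) by
      simp [Complex.ext_iff]]
    rw [neg_smul, ← smul_neg, neg_sub]
  · rw [smul_smul]
    rw [show Complex.I * (2⁻¹ * Complex.I) = -2⁻¹ by
      rw [mul_comm, mul_assoc, Complex.I_mul_I]; ring]
    rw [neg_smul, ← smul_neg, neg_sub, smul_add, smul_sub]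
    rw [show (2⁻¹:ℂ) • x + (2⁻¹:ℂ) • star x + ((2⁻¹:ℂ) • x - (2⁻¹:ℂ) • star x)
        = ((2⁻¹:ℂ) + 2⁻¹) • x by module]
    norm_num
  · rw [norm_smul]
    rw [show ‖(2⁻¹ : ℂ)‖ = 2⁻¹ by norm_num]
    calc 2⁻¹ * ‖x + star x‖ ≤ 2⁻¹ * (‖x‖ + ‖star x‖) :=
          mul_le_mul_of_nonneg_left (norm_add_le _ _) (by norm_num)
      _ = ‖x‖ := by rw [norm_star]; ring
  · rw [norm_smul]
    rw [show ‖(2⁻¹ * Complex.I : ℂ)‖ = 2⁻¹ by simp]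
    calc 2⁻¹ * ‖star x - x‖ ≤ 2⁻¹ * (‖star x‖ + ‖x‖) :=
          mul_le_mul_of_nonneg_left (norm_sub_le _ _) (by norm_num)
      _ = ‖x‖ := by rw [norm_star]; ring


open scoped ComplexOrder in
/-- Partition-of-unity approximation of a normal element and its modulus squared. -/
lemma kadison_aux_approx {A : Type*} [CStarAlgebra A] [Nontrivial A] [PartialOrder A]
    [StarOrderedRing A] (a : A) [ha : IsStarNormal a] {ε : ℝ} (hε : 0 < ε) :
    ∃ (F : Finset ℂ) (e : ℂ → A),
      (∀ c ∈ F, (0:A) ≤ e c) ∧ (∑ c ∈ F, e c = 1) ∧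
      ‖a - ∑ c ∈ F, c • e c‖ ≤ ε ∧
      ‖a * star a - ∑ c ∈ F, ((‖c‖ ^ 2 : ℝ) : ℂ) • e c‖ ≤ 2 * ‖a‖ * ε := by
  classical
  set σ : Set ℂ := spectrum ℂ a with hσ
  have hσc : IsCompact σ := spectrum.isCompact a
  -- a finite ε-net for the spectrum
  obtain ⟨F0, hF0σ, hF0fin, hcovset⟩ := hσc.elim_finite_subcover_image
    (b := σ) (c := fun c => Metric.ball c ε)
    (fun c _ => Metric.isOpen_ball)
    (fun z hz => Set.mem_biUnion hz (Metric.mem_ball_self hε))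
  set F : Finset ℂ := hF0fin.toFinset with hF
  have hFσ : ∀ c ∈ F, c ∈ σ := fun c hc => hF0σ (hF0fin.mem_toFinset.mp hc)
  have hcov : ∀ z ∈ σ, ∃ c ∈ F, dist z c < ε := by
    intro z hz
    obtain ⟨c, hc, hzc⟩ := Set.mem_iUnion₂.mp (hcovset hz)
    exact ⟨c, hF0fin.mem_toFinset.mpr hc, Metric.mem_ball.mp hzc⟩
  -- bump functions
  set g : ℂ → ℂ → ℝ := fun c z => max (ε - dist z c) 0 with hg
  have hgc : ∀ c, Continuous (g c) :=
    fun c => (continuous_const.sub (continuous_id.dist continuous_const)).max continuous_const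
  have hg0 : ∀ c z, 0 ≤ g c z := fun c z => le_max_right _ _
  have hgsupp : ∀ c z, g c z ≠ 0 → dist z c < ε := by
    intro c z hne
    by_contra hge
    exact hne (max_eq_right (by linarith [not_lt.mp hge]))
  set h : ℂ → ℝ := fun z => ∑ c ∈ F, g c z with hh
  have hhc : Continuous h := continuous_finset_sum _ fun c _ => hgc c
  have hh0 : ∀ z ∈ σ, 0 < h z := by
    intro z hz
    obtain ⟨c, hc, hzc⟩ := hcov z hz
    exact Finset.sum_pos' (fun c _ => hg0 c z)
      ⟨c, hc, lt_max_of_lt_left (by linarith)⟩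
  -- the partition of unity, complex valued
  set u : ℂ → ℂ → ℂ := fun c z => ((g c z / h z : ℝ) : ℂ) with hu
  have hucont : ∀ c, ContinuousOn (u c) σ := fun c =>
    Complex.continuous_ofReal.comp_continuousOn
      (((hgc c).continuousOn).div hhc.continuousOn (fun z hz => (hh0 z hz).ne'))
  have husumR : ∀ z ∈ σ, ∑ c ∈ F, g c z / h z = 1 := by
    intro z hz
    rw [← Finset.sum_div, div_self (hh0 z hz).ne']
  have husum : ∀ z ∈ σ, ∑ c ∈ F, u c z = 1 := by
    intro z hz
    show ∑ c ∈ F, ((g c z / h z : ℝ) : ℂ) = 1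
    rw [← Complex.ofReal_sum, husumR z hz, Complex.ofReal_one]
  -- the positive elements
  set e : ℂ → A := fun c => cfc (u c) a with he
  refine ⟨F, e, ?_, ?_, ?_, ?_⟩
  · intro c hc
    exact cfc_nonneg fun z hz =>
      Complex.zero_le_real.mpr (div_nonneg (hg0 c z) (hh0 z hz).le)
  · have h1 : ∑ c ∈ F, e c = cfc (∑ c ∈ F, u c) a := by
      rw [cfc_sum (fun c => u c) a F (fun c _ => hucont c)]
    rw [h1, cfc_congr (f := ∑ c ∈ F, u c) (g := fun _ => 1)
      (fun z hz => by simpa [Finset.sum_apply] using husum z hz)]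
    exact cfc_const_one ℂ a
  · -- ‖a - ∑ c • e c‖ ≤ ε
    have hs : ∑ c ∈ F, c • e c = cfc (fun z => ∑ c ∈ F, c * u c z) a := by
      have h2 : ∀ c ∈ F, c • e c = cfc (fun z => c * u c z) a := fun c _ =>
        (cfc_const_mul c (u c) a (hucont c)).symm
      rw [Finset.sum_congr rfl h2]
      rw [← cfc_sum (fun c => fun z => c * u c z) a F
        (fun c _ => continuousOn_const.mul (hucont c))]
      congr 1
      ext z
      simp [Finset.sum_apply]
    have hsubeq := cfc_sub (fun z : ℂ => z) (fun z => ∑ c ∈ F, c * u c z) a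
      continuousOn_id
      (continuousOn_finset_sum F (fun c _ => continuousOn_const.mul (hucont c)))
    rw [cfc_id' ℂ a] at hsubeq
    have hdiff : a - ∑ c ∈ F, c • e c
        = cfc (fun z => z - ∑ c ∈ F, c * u c z) a := by
      rw [hs, ← hsubeq]
    rw [hdiff]
    refine norm_cfc_le hε.le fun z hz => ?_
    have hz1 : z = ∑ c ∈ F, z * u c z := by
      rw [← Finset.mul_sum, husum z hz, mul_one]
    calc ‖z - ∑ c ∈ F, c * u c z‖
        = ‖∑ c ∈ F, (z - c) * u c z‖ := by
          rw [Finset.sum_congr rfl (fun c _ => sub_mul z c (u c z)),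
            Finset.sum_sub_distrib, ← hz1]
      _ ≤ ∑ c ∈ F, ‖(z - c) * u c z‖ := norm_sum_le _ _
      _ ≤ ∑ c ∈ F, ε * (g c z / h z) := by
          refine Finset.sum_le_sum fun c hc => ?_
          rw [norm_mul, hu]
          rw [Complex.norm_real, Real.norm_eq_abs,
            abs_of_nonneg (div_nonneg (hg0 c z) (hh0 z hz).le)]
          rcases eq_or_ne (g c z) 0 with h0 | h0
          · rw [h0, zero_div, mul_zero, mul_zero]
          · refine mul_le_mul_of_nonneg_right ?_
              (div_nonneg (hg0 c z) (hh0 z hz).le)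
            rw [← dist_eq_norm]
            exact (hgsupp c z h0).le
      _ = ε := by rw [← Finset.mul_sum, husumR z hz, mul_one]
  · -- second bound
    have haR : ∀ z, z ∈ σ → ‖z‖ ≤ ‖a‖ := fun z hz => spectrum.norm_le_norm_of_mem hz
    have ht : ∑ c ∈ F, ((‖c‖ ^ 2 : ℝ) : ℂ) • e c
        = cfc (fun z => ∑ c ∈ F, ((‖c‖ ^ 2 : ℝ) : ℂ) * u c z) a := by
      have h2 : ∀ c ∈ F, ((‖c‖ ^ 2 : ℝ) : ℂ) • e c
          = cfc (fun z => ((‖c‖ ^ 2 : ℝ) : ℂ) * u c z) a := fun c _ =>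
        (cfc_const_mul _ (u c) a (hucont c)).symm
      rw [Finset.sum_congr rfl h2]
      rw [← cfc_sum (fun c => fun z => ((‖c‖ ^ 2 : ℝ) : ℂ) * u c z) a F
        (fun c _ => continuousOn_const.mul (hucont c))]
      congr 1
      ext z
      simp [Finset.sum_apply]
    have haa : a * star a = cfc (fun z : ℂ => z * star z) a := by
      have h1 := cfc_mul (fun z : ℂ => z) (fun z : ℂ => star z) a
        continuousOn_id continuous_star.continuousOn
      rw [cfc_id' ℂ a, cfc_star_id (R := ℂ) (a := a) ha] at h1
      exact h1.symm
    have hsubeq := cfc_sub (fun z : ℂ => z * star z)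
      (fun z => ∑ c ∈ F, ((‖c‖ ^ 2 : ℝ) : ℂ) * u c z) a
      (continuousOn_id.mul continuous_star.continuousOn)
      (continuousOn_finset_sum F (fun c _ => continuousOn_const.mul (hucont c)))
    have hdiff : a * star a - ∑ c ∈ F, ((‖c‖ ^ 2 : ℝ) : ℂ) • e c
        = cfc (fun z => z * star z - ∑ c ∈ F, ((‖c‖ ^ 2 : ℝ) : ℂ) * u c z) a := by
      rw [ht, haa, ← hsubeq]
    rw [hdiff]
    refine norm_cfc_le (by positivity) fun z hz => ?_
    -- rewrite as a real number
    have hzz : (z * star z : ℂ) = ((‖z‖ ^ 2 : ℝ) : ℂ) := by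
      rw [RCLike.star_def, RCLike.mul_conj]
      norm_cast
    have hexp : z * star z - ∑ c ∈ F, ((‖c‖ ^ 2 : ℝ) : ℂ) * u c z
        = ((‖z‖ ^ 2 - ∑ c ∈ F, ‖c‖ ^ 2 * (g c z / h z) : ℝ) : ℂ) := by
      rw [hzz, hu]
      push_cast
      ring
    rw [hexp, Complex.norm_real, Real.norm_eq_abs]
    -- real estimate
    have h1 : ‖z‖ ^ 2 = ∑ c ∈ F, ‖z‖ ^ 2 * (g c z / h z) := by
      rw [← Finset.mul_sum, husumR z hz, mul_one]
    have h2 : ‖z‖ ^ 2 - ∑ c ∈ F, ‖c‖ ^ 2 * (g c z / h z)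
        = ∑ c ∈ F, (‖z‖ ^ 2 - ‖c‖ ^ 2) * (g c z / h z) := by
      rw [Finset.sum_congr rfl (fun c _ => sub_mul (‖z‖^2) (‖c‖^2) (g c z / h z)),
        Finset.sum_sub_distrib, ← h1]
    rw [h2]
    calc |∑ c ∈ F, (‖z‖ ^ 2 - ‖c‖ ^ 2) * (g c z / h z)|
        ≤ ∑ c ∈ F, |(‖z‖ ^ 2 - ‖c‖ ^ 2) * (g c z / h z)| :=
          Finset.abs_sum_le_sum_abs _ _
      _ ≤ ∑ c ∈ F, (2 * ‖a‖ * ε) * (g c z / h z) := by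
          refine Finset.sum_le_sum fun c hc => ?_
          rw [abs_mul, abs_of_nonneg (div_nonneg (hg0 c z) (hh0 z hz).le)]
          rcases eq_or_ne (g c z) 0 with h0 | h0
          · rw [h0, zero_div, mul_zero, mul_zero]
          · refine mul_le_mul_of_nonneg_right ?_
              (div_nonneg (hg0 c z) (hh0 z hz).le)
            have e1 : |‖z‖ - ‖c‖| ≤ dist z c := by
              rw [dist_eq_norm]; exact abs_norm_sub_norm_le z c
            have e2 : dist z c < ε := hgsupp c z h0
            have e3 : ‖z‖ ≤ ‖a‖ := haR z hz
            have e4 : ‖c‖ ≤ ‖a‖ := haR c (hFσ c hc)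
            have e5 : (0:ℝ) ≤ ‖z‖ := norm_nonneg z
            have e6 : (0:ℝ) ≤ ‖c‖ := norm_nonneg c
            rw [abs_le]
            constructor <;> nlinarith [abs_nonneg (‖z‖ - ‖c‖), le_abs_self (‖z‖ - ‖c‖),
              neg_abs_le (‖z‖ - ‖c‖)]
      _ = 2 * ‖a‖ * ε := by rw [← Finset.mul_sum, husumR z hz, mul_one]

/-- Kadison's inequality: if `φ : 𝒜 → End(V)` is a unital positive linear map from a unital
C*-algebra to the operators on a finite-dimensional Hilbert space, then for every normal
element `a`, `φ(a) φ(a)^* ≤ φ(a a^*)` in the Loewner order (i.e. the difference is a positive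
operator). -/
theorem kadison_inequality
    {A : Type*} [NormedRing A] [StarRing A] [CStarRing A] [CompleteSpace A]
    [NormedAlgebra ℂ A] [StarModule ℂ A] [PartialOrder A] [StarOrderedRing A]
    {V : Type*} [NormedAddCommGroup V] [InnerProductSpace ℂ V] [FiniteDimensional ℂ V]
    (φ : A →ₗ[ℂ] (V →L[ℂ] V))
    (hunital : φ 1 = 1)
    (hpos : ∀ x : A, 0 ≤ x → (φ x).IsPositive)
    (a : A) (ha : a * star a = star a * a) :
    ((φ (a * star a)) - (φ a) ∘L ContinuousLinearMap.adjoint (φ a)).IsPositive := by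
  haveI : CompleteSpace V := FiniteDimensional.complete ℂ V
  obtain hA | hA := subsingleton_or_nontrivial A
  · -- degenerate case : `A` trivial forces `V →L[ℂ] V` trivial
    have h01 : (0 : V →L[ℂ] V) = 1 := by
      rw [← hunital, show (1:A) = 0 from Subsingleton.elim _ _, map_zero]
    haveI : Subsingleton (V →L[ℂ] V) := subsingleton_of_zero_eq_one h01
    rw [Subsingleton.elim ((φ (a * star a)) - (φ a) ∘L ContinuousLinearMap.adjoint (φ a))
      (0 : V →L[ℂ] V)]
    exact ContinuousLinearMap.isPositive_zero
  letI : CStarAlgebra A :=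
    { ‹NormedRing A›, ‹StarRing A›, ‹CStarRing A›, ‹CompleteSpace A›,
      ‹NormedAlgebra ℂ A›, ‹StarModule ℂ A› with }
  haveI hnormal : IsStarNormal a := ⟨ha.symm⟩
  have haa_pos : (0:A) ≤ a * star a := mul_star_self_nonneg a
  constructor
  · -- self-adjointness of the difference
    have h1 : IsSelfAdjoint (φ (a * star a)) := (hpos _ haa_pos).isSelfAdjoint
    have h2 : IsSelfAdjoint ((φ a) ∘L ContinuousLinearMap.adjoint (φ a)) := by
      rw [ContinuousLinearMap.isSelfAdjoint_iff', ContinuousLinearMap.adjoint_comp,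
        ContinuousLinearMap.adjoint_adjoint]
    exact (h1.sub h2).isSymmetric
  · intro v
    set X : ℝ := RCLike.re (inner ℂ ((φ (a * star a)) v) v : ℂ) with hX
    have hX0 : 0 ≤ X := (hpos _ haa_pos).re_inner_nonneg_left v
    set w : V := (ContinuousLinearMap.adjoint (φ a)) v with hw
    -- reduction of the goal
    have hred : ContinuousLinearMap.reApplyInnerSelf
        ((φ (a * star a)) - (φ a) ∘L ContinuousLinearMap.adjoint (φ a)) v
        = X - ‖w‖ ^ 2 := by
      rw [ContinuousLinearMap.reApplyInnerSelf_apply, ContinuousLinearMap.sub_apply,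
        inner_sub_left, map_sub]
      congr 1
      rw [ContinuousLinearMap.comp_apply, ← hw]
      rw [show (inner ℂ ((φ a) w) v : ℂ) = inner ℂ w ((ContinuousLinearMap.adjoint (φ a)) v) from
        (ContinuousLinearMap.adjoint_inner_right (φ a) w v).symm]
      rw [← hw, ← @inner_self_eq_norm_sq ℂ]
    -- the key estimate for every ε > 0
    have hεbound : ∀ ε : ℝ, 0 < ε →
        ‖w‖ ^ 2 ≤ Real.sqrt (X + 12 * ‖a‖ * ‖v‖ ^ 2 * ε) * ‖w‖ + 6 * ε * ‖v‖ * ‖w‖ := by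
      intro ε hε
      obtain ⟨F, e, he0, hesum, happ1, happ2⟩ := kadison_aux_approx a hε
      set P : ℂ → V →L[ℂ] V := fun c => φ (e c) with hP
      have hPpos : ∀ c ∈ F, (P c).IsPositive := fun c hc => hpos _ (he0 c hc)
      have hPsum : ∑ c ∈ F, P c = 1 := by
        rw [hP, ← map_sum, hesum, hunital]
      set s : A := ∑ c ∈ F, c • e c with hs
      set t : A := ∑ c ∈ F, ((‖c‖ ^ 2 : ℝ) : ℂ) • e c with ht
      -- identification of φ s and its adjoint
      have hT : φ s = ∑ c ∈ F, c • P c := by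
        rw [hs, map_sum]
        exact Finset.sum_congr rfl fun c _ => by rw [map_smul]
      have hTadj : ContinuousLinearMap.adjoint (φ s) = ∑ c ∈ F, (starRingEnd ℂ) c • P c := by
        rw [hT, map_sum]
        refine Finset.sum_congr rfl fun c hc => ?_
        rw [map_smulₛₗ]
        congr 1
        exact ContinuousLinearMap.isSelfAdjoint_iff'.mp (hPpos c hc).isSelfAdjoint
      have hSop : ∑ c ∈ F, ((‖(starRingEnd ℂ) c‖ ^ 2 : ℝ) : ℂ) • P c = φ t := by
        rw [ht, map_sum]
        refine Finset.sum_congr rfl fun c _ => ?_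
        rw [RCLike.norm_conj, map_smul]
      -- bound for re ⟪φ t v, v⟫
      have hSX : RCLike.re (inner ℂ ((φ t) v) v : ℂ) ≤ X + 12 * ‖a‖ * ‖v‖ ^ 2 * ε := by
        have d1 : φ t = φ (a * star a) - φ (a * star a - t) := by
          rw [map_sub, sub_sub_cancel]
        rw [d1, ContinuousLinearMap.sub_apply, inner_sub_left, map_sub]
        have d2 : ‖(inner ℂ ((φ (a * star a - t)) v) v : ℂ)‖ ≤ 12 * ‖a‖ * ‖v‖ ^ 2 * ε := by
          calc ‖(inner ℂ ((φ (a * star a - t)) v) v : ℂ)‖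
              ≤ 6 * ‖a * star a - t‖ * ‖v‖ * ‖v‖ :=
                kadison_aux_bound φ hunital hpos _ v v
            _ ≤ 6 * (2 * ‖a‖ * ε) * ‖v‖ * ‖v‖ := by gcongr
            _ = 12 * ‖a‖ * ‖v‖ ^ 2 * ε := by ring
        have d3 : |RCLike.re (inner ℂ ((φ (a * star a - t)) v) v : ℂ)|
            ≤ ‖(inner ℂ ((φ (a * star a - t)) v) v : ℂ)‖ := RCLike.abs_re_le_norm _
        have := abs_le.mp (d3.trans d2)
        rw [← hX]
        linarith [this.1]
      -- main term estimate
      have e3 : ‖(inner ℂ v ((φ s) w) : ℂ)‖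
          ≤ Real.sqrt (X + 12 * ‖a‖ * ‖v‖ ^ 2 * ε) * ‖w‖ := by
        have h1 : (inner ℂ v ((φ s) w) : ℂ)
            = inner ℂ ((ContinuousLinearMap.adjoint (φ s)) v) w :=
          (ContinuousLinearMap.adjoint_inner_left (φ s) w v).symm
        rw [h1, hTadj]
        have h2 := kadison_aux_sum F P hPpos hPsum (fun c => (starRingEnd ℂ) c) v w
        rw [hSop] at h2
        refine h2.trans ?_
        have h3 : RCLike.re (inner ℂ ((φ t) v) v : ℂ) ≤ X + 12 * ‖a‖ * ‖v‖ ^ 2 * ε := hSX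
        exact mul_le_mul_of_nonneg_right (Real.sqrt_le_sqrt h3) (norm_nonneg w)
      -- error term estimate
      have e4 : ‖(inner ℂ v ((φ (a - s)) w) : ℂ)‖ ≤ 6 * ε * ‖v‖ * ‖w‖ := by
        rw [← inner_conj_symm, RCLike.norm_conj]
        calc ‖(inner ℂ ((φ (a - s)) w) v : ℂ)‖
            ≤ 6 * ‖a - s‖ * ‖w‖ * ‖v‖ := kadison_aux_bound φ hunital hpos _ w v
          _ ≤ 6 * ε * ‖w‖ * ‖v‖ := by gcongr
          _ = 6 * ε * ‖v‖ * ‖w‖ := by ring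
      -- assembling
      have e0 : (‖w‖:ℝ) ^ 2 = RCLike.re (inner ℂ w w : ℂ) :=
        (@inner_self_eq_norm_sq ℂ _ _ _ _ w).symm
      have e1 : (inner ℂ w w : ℂ) = inner ℂ v ((φ a) w) := by
        nth_rewrite 1 [hw]
        exact ContinuousLinearMap.adjoint_inner_left (φ a) w v
      have e2 : (inner ℂ v ((φ a) w) : ℂ)
          = inner ℂ v ((φ s) w) + inner ℂ v ((φ (a - s)) w) := by
        rw [map_sub, ContinuousLinearMap.sub_apply, inner_sub_right]
        ring
      calc (‖w‖:ℝ) ^ 2 = RCLike.re ((inner ℂ v ((φ s) w) : ℂ) + inner ℂ v ((φ (a - s)) w)) := by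
            rw [e0, e1, e2]
        _ ≤ ‖(inner ℂ v ((φ s) w) : ℂ) + (inner ℂ v ((φ (a - s)) w) : ℂ)‖ := RCLike.re_le_norm _
        _ ≤ ‖(inner ℂ v ((φ s) w) : ℂ)‖ + ‖(inner ℂ v ((φ (a - s)) w) : ℂ)‖ := norm_add_le _ _
        _ ≤ Real.sqrt (X + 12 * ‖a‖ * ‖v‖ ^ 2 * ε) * ‖w‖ + 6 * ε * ‖v‖ * ‖w‖ :=
            add_le_add e3 e4
    -- pass to the limit ε → 0⁺
    have hlim : ‖w‖ ^ 2 ≤ X := by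
      rcases eq_or_ne (‖w‖) 0 with h0 | h0
      · rw [h0]; simpa using hX0
      have hwpos : 0 < ‖w‖ := lt_of_le_of_ne (norm_nonneg w) (Ne.symm h0)
      have hw_le : ∀ ε : ℝ, 0 < ε →
          ‖w‖ ≤ Real.sqrt (X + 12 * ‖a‖ * ‖v‖ ^ 2 * ε) + 6 * ε * ‖v‖ := by
        intro ε hε
        have h1 := hεbound ε hε
        have h3 : ‖w‖ * ‖w‖ ≤ (Real.sqrt (X + 12 * ‖a‖ * ‖v‖ ^ 2 * ε) + 6 * ε * ‖v‖) * ‖w‖ := by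
          nlinarith [h1]
        exact le_of_mul_le_mul_right h3 hwpos
      have htend : Filter.Tendsto
          (fun ε : ℝ => Real.sqrt (X + 12 * ‖a‖ * ‖v‖ ^ 2 * ε) + 6 * ε * ‖v‖)
          (nhdsWithin 0 (Set.Ioi 0)) (nhds (Real.sqrt X)) := by
        have hcont : Continuous
            (fun ε : ℝ => Real.sqrt (X + 12 * ‖a‖ * ‖v‖ ^ 2 * ε) + 6 * ε * ‖v‖) := by
          refine Continuous.add ?_ ?_
          · exact Real.continuous_sqrt.comp
              (continuous_const.add (continuous_const.mul continuous_id))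
          · exact (continuous_const.mul continuous_id).mul continuous_const
        have h0' := hcont.tendsto 0
        rw [show Real.sqrt (X + 12 * ‖a‖ * ‖v‖ ^ 2 * 0) + 6 * 0 * ‖v‖ = Real.sqrt X by
          norm_num] at h0'
        exact h0'.mono_left nhdsWithin_le_nhds
      have hle : ‖w‖ ≤ Real.sqrt X := by
        refine ge_of_tendsto htend ?_
        filter_upwards [self_mem_nhdsWithin] with ε hε
        exact hw_le ε hε
      calc ‖w‖ ^ 2 ≤ (Real.sqrt X) ^ 2 := by
            nlinarith [norm_nonneg w, Real.sqrt_nonneg X]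
        _ = X := Real.sq_sqrt hX0
    rw [hred]
    linarith
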